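/- arXiv:2306.11708 — 4 statements merged into one kernel-verified Lean document; each statement's English description precedes it below -/
import Mathlib

section
/- Let K be a nonempty compact convex subset of ℝ^n. Then K equals the closure of the convex hull of its exposed points (Straszewicz's theorem). -/
open Set Metric

local notation "⟪" x ", " y "⟫" => @inner ℝ _ _ x y

/-- The convex hull of a compact set in a finite-dimensional real normed space is compact. -/
lemma aux_isCompact_convexHull {F : Type*} [NormedAddCommGroup F] [NormedSpace ℝ F]
    [FiniteDimensional ℝ F] {s : Set F} (hs : IsCompact s) : IsCompact (convexHull ℝ s) := by
  classical
  rcases s.eq_empty_or_nonempty with rfl | ⟨a, ha⟩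
  · simp [convexHull_empty, isCompact_empty]
  set d := Module.finrank ℝ F + 1 with hd
  have key : convexHull ℝ s =
      (fun p : (Fin d → ℝ) × (Fin d → F) => ∑ i, p.1 i • p.2 i) ''
        (stdSimplex ℝ (Fin d) ×ˢ Set.univ.pi fun _ : Fin d => s) := by
    apply Subset.antisymm
    · intro x hx
      obtain ⟨ι, hι, z, w, hzs, hai, hwpos, hw1, hzw⟩ :=
        eq_pos_convex_span_of_mem_convexHull hx
      have hcard : Fintype.card ι ≤ d :=
        hai.card_le_finrank_succ.trans (by
          simpa [hd] using add_le_add_right (Submodule.finrank_le (vectorSpan ℝ (Set.range z))) 1)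
      obtain ⟨f⟩ : Nonempty (ι ↪ Fin d) :=
        Function.Embedding.nonempty_of_card_le (by simpa using hcard)
      set W : Fin d → ℝ := fun j => if h : ∃ i, f i = j then w h.choose else 0 with hW
      set Z : Fin d → F := fun j => if h : ∃ i, f i = j then z h.choose else a with hZ
      have hWf : ∀ i : ι, W (f i) = w i := by
        intro i
        have h : ∃ i', f i' = f i := ⟨i, rfl⟩
        have : h.choose = i := f.injective h.choose_spec
        simp [hW, dif_pos h, this]
      have hZf : ∀ i : ι, Z (f i) = z i := by
        intro i
        have h : ∃ i', f i' = f i := ⟨i, rfl⟩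
        have : h.choose = i := f.injective h.choose_spec
        simp [hZ, dif_pos h, this]
      have hWz : ∀ j ∉ Finset.univ.image f, W j = 0 := by
        intro j hj
        have : ¬ ∃ i, f i = j := by
          rintro ⟨i, rfl⟩; exact hj (Finset.mem_image_of_mem f (Finset.mem_univ i))
        simp [hW, dif_neg this]
      have hsum : ∀ (g : Fin d → ℝ → F → F),
          True := fun _ => trivial
      have hsumW : ∑ j, W j = 1 := by
        rw [← Finset.sum_subset (Finset.subset_univ (Finset.univ.image f))
          (fun j _ hj => hWz j hj)]
        rw [Finset.sum_image (fun i _ i' _ h => f.injective h)]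
        simpa [hWf] using hw1
      have hsumWZ : ∑ j, W j • Z j = x := by
        rw [← Finset.sum_subset (Finset.subset_univ (Finset.univ.image f))
          (fun j _ hj => by simp [hWz j hj])]
        rw [Finset.sum_image (fun i _ i' _ h => f.injective h)]
        simp only [hWf, hZf]
        exact hzw
      refine ⟨(W, Z), ⟨⟨fun j => ?_, hsumW⟩, fun j _ => ?_⟩, hsumWZ⟩
      · by_cases h : ∃ i, f i = j
        · simp only [hW, dif_pos h]; exact (hwpos _).le
        · simp [hW, dif_neg h]
      · by_cases h : ∃ i, f i = j
        · simp only [hZ, dif_pos h]; exact hzs ⟨_, rfl⟩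
        · simp only [hZ, dif_neg h]; exact ha
    · rintro x ⟨⟨W, Z⟩, ⟨⟨hW0, hW1⟩, hZ⟩, rfl⟩
      exact (convex_convexHull ℝ s).sum_mem (fun i _ => hW0 i) hW1
        (fun i _ => subset_convexHull ℝ s (hZ i (Set.mem_univ i)))
  rw [key]
  refine IsCompact.image ?_ ?_
  · exact (isCompact_stdSimplex ..).prod (isCompact_univ_pi fun _ => hs)
  · exact continuous_finset_sum _ fun i _ =>
      ((continuous_apply i).comp continuous_fst).smul
        ((continuous_apply i).comp continuous_snd)

/-- A point of `K` farthest from some point `q` is an exposed point of `K`. -/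
lemma aux_farthest_exposed {E : Type*} [NormedAddCommGroup E] [InnerProductSpace ℝ E]
    {K : Set E} {q p : E} (hp : p ∈ K)
    (hmax : ∀ y ∈ K, dist y q ≤ dist p q) : p ∈ K.exposedPoints ℝ := by
  refine ⟨hp, innerSL ℝ (p - q), fun y hy => ?_⟩
  have h := hmax y hy
  have hsq : ‖y - q‖ ^ 2 ≤ ‖p - q‖ ^ 2 := by
    rw [← dist_eq_norm, ← dist_eq_norm]
    exact pow_le_pow_left₀ dist_nonneg h 2
  have expand : ‖y - q‖ ^ 2 = ‖p - q‖ ^ 2 + 2 * ⟪p - q, y - p⟫ + ‖y - p‖ ^ 2 := by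
    have hyq : y - q = (p - q) + (y - p) := by abel
    rw [hyq, norm_add_sq_real]
  have key : 2 * ⟪p - q, y - p⟫ + ‖y - p‖ ^ 2 ≤ 0 := by linarith
  have hinner : (innerSL ℝ (p - q)) y - (innerSL ℝ (p - q)) p = ⟪p - q, y - p⟫ := by
    simp only [innerSL_apply_apply, inner_sub_left, inner_sub_right]
  constructor
  · nlinarith [sq_nonneg ‖y - p‖]
  · intro hle
    have h0 : (0 : ℝ) ≤ ⟪p - q, y - p⟫ := by linarith
    have hn : ‖y - p‖ ^ 2 ≤ 0 := by linarith
    have : ‖y - p‖ = 0 := by nlinarith [norm_nonneg (y - p)]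
    have : y - p = 0 := norm_eq_zero.mp this
    exact sub_eq_zero.mp this

/-- Every extreme point of a compact convex set in a finite-dimensional real inner product
space lies in the closure of the set of exposed points. -/
lemma aux_extreme_subset_closure_exposed {E : Type*} [NormedAddCommGroup E]
    [InnerProductSpace ℝ E] [FiniteDimensional ℝ E] {K : Set E}
    (hK : IsCompact K) (hconv : Convex ℝ K) :
    K.extremePoints ℝ ⊆ closure (K.exposedPoints ℝ) := by
  intro x hx
  have hxK : x ∈ K := hx.1
  rw [Metric.mem_closure_iff]
  intro ε hε
  set S := K \ ball x ε with hS
  have hScomp : IsCompact S := by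
    rw [hS, Set.diff_eq]
    exact hK.inter_right isOpen_ball.isClosed_compl
  have hxC : x ∉ convexHull ℝ S := by
    intro h
    have hsub : S ⊆ K \ {x} :=
      Set.diff_subset_diff_right (Set.singleton_subset_iff.2 (mem_ball_self hε))
    exact (hconv.mem_extremePoints_iff_mem_diff_convexHull_diff.mp hx).2
      (convexHull_mono hsub h)
  have hCc : IsCompact (convexHull ℝ S) := aux_isCompact_convexHull hScomp
  obtain ⟨l, r, hlr, hrx⟩ :=
    geometric_hahn_banach_closed_point (convex_convexHull ℝ S) hCc.isClosed hxC
  set u : E := (InnerProductSpace.toDual ℝ E).symm l with hu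
  have hul : ∀ y, l y = ⟪u, y⟫ := by
    intro y
    have : (InnerProductSpace.toDual ℝ E) u = l :=
      (InnerProductSpace.toDual ℝ E).apply_symm_apply l
    rw [← this]
    simp [InnerProductSpace.toDual_apply_apply]
  set δ : ℝ := l x - r with hδ
  have hδpos : 0 < δ := by simp only [hδ]; linarith
  obtain ⟨R, hRsub⟩ := hK.isBounded.subset_closedBall x
  have hR0 : 0 ≤ R := by
    have := hRsub hxK
    simpa using this
  set t : ℝ := R ^ 2 / (2 * δ) + 1 with ht
  have htpos : 0 < t := by positivity
  set q : E := x - t • u with hq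
  have hxq : ‖x - q‖ ^ 2 = t ^ 2 * ‖u‖ ^ 2 := by
    have : x - q = t • u := by rw [hq]; abel
    rw [this, norm_smul]
    rw [mul_pow]
    simp [abs_of_pos htpos]
  have hfar : ∀ y ∈ S, ‖y - q‖ ^ 2 < ‖x - q‖ ^ 2 := by
    intro y hy
    have hyx : ‖y - x‖ ≤ R := by
      have := hRsub hy.1
      rwa [mem_closedBall, dist_eq_norm] at this
    have hly : l y ≤ r := le_of_lt (hlr y (subset_convexHull ℝ S hy))
    have hinner : ⟪u, y - x⟫ ≤ -δ := by
      rw [inner_sub_right, ← hul y, ← hul x]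
      simp only [hδ]; linarith
    have hexp : y - q = (y - x) + t • u := by rw [hq]; abel
    have : ‖y - q‖ ^ 2 = ‖y - x‖ ^ 2 + 2 * (t * ⟪y - x, u⟫) + t ^ 2 * ‖u‖ ^ 2 := by
      rw [hexp, norm_add_sq_real, real_inner_smul_right, norm_smul, mul_pow]
      simp [abs_of_pos htpos]
    rw [this, hxq]
    have hsym : ⟪y - x, u⟫ = ⟪u, y - x⟫ := real_inner_comm _ _
    have hyx2 : ‖y - x‖ ^ 2 ≤ R ^ 2 := pow_le_pow_left₀ (norm_nonneg _) hyx 2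
    have h2t : t * ⟪y - x, u⟫ ≤ t * (-δ) := by
      rw [hsym]; exact mul_le_mul_of_nonneg_left hinner htpos.le
    have htR : R ^ 2 - 2 * (t * δ) < 0 := by
      have : R ^ 2 / (2 * δ) < t := by rw [ht]; linarith
      have := (div_lt_iff₀ (by positivity : (0:ℝ) < 2 * δ)).mp this
      nlinarith
    nlinarith
  obtain ⟨p, hpK, hpmax⟩ := hK.exists_isMaxOn ⟨x, hxK⟩
    ((continuous_id.dist continuous_const).continuousOn : ContinuousOn (fun y => dist y q) K)
  have hpmax' : ∀ y ∈ K, dist y q ≤ dist p q := fun y hy => hpmax hy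
  have hpball : p ∈ ball x ε := by
    by_contra hpb
    have hpS : p ∈ S := ⟨hpK, hpb⟩
    have h1 : ‖p - q‖ ^ 2 < ‖x - q‖ ^ 2 := hfar p hpS
    have h2 : dist x q ≤ dist p q := hpmax' x hxK
    rw [dist_eq_norm, dist_eq_norm] at h2
    nlinarith [norm_nonneg (p - q), norm_nonneg (x - q)]
  exact ⟨p, aux_farthest_exposed hpK hpmax', mem_ball'.mp hpball⟩

/-- Straszewicz's theorem: a nonempty compact convex subset of ℝ^n equals the
closure of the convex hull of its exposed points. -/
theorem straszewicz_closure_convexHull_exposedPoints (n : ℕ)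
    (K : Set (EuclideanSpace ℝ (Fin n))) (hne : K.Nonempty)
    (hK : IsCompact K) (hconv : Convex ℝ K) :
    K = closure (convexHull ℝ (K.exposedPoints ℝ)) := by
  apply Subset.antisymm
  · have h1 : K = closure (convexHull ℝ (K.extremePoints ℝ)) :=
      (closure_convexHull_extremePoints hK hconv).symm
    have h2 : K.extremePoints ℝ ⊆ closure (K.exposedPoints ℝ) :=
      aux_extreme_subset_closure_exposed hK hconv
    have h3 : convexHull ℝ (closure (K.exposedPoints ℝ)) ⊆
        closure (convexHull ℝ (K.exposedPoints ℝ)) :=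
      convexHull_min (closure_mono (subset_convexHull ℝ _))
        (convex_convexHull ℝ _).closure
    calc K = closure (convexHull ℝ (K.extremePoints ℝ)) := h1
      _ ⊆ closure (convexHull ℝ (closure (K.exposedPoints ℝ))) :=
          closure_mono (convexHull_mono h2)
      _ ⊆ closure (closure (convexHull ℝ (K.exposedPoints ℝ))) := closure_mono h3
      _ = closure (convexHull ℝ (K.exposedPoints ℝ)) := closure_closure
  · exact closure_minimal
      (convexHull_min exposedPoints_subset hconv) hK.isClosed
end

section
/- Every nonempty compact convex subset of ℝ^n has at least one exposed point. -/
/-- Every nonempty compact convex subset of ℝ^n has an exposed point. -/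
theorem exposedPoints_nonempty (n : ℕ)
    (K : Set (EuclideanSpace ℝ (Fin n))) (hne : K.Nonempty)
    (hK : IsCompact K) (hconv : Convex ℝ K) :
    (K.exposedPoints ℝ).Nonempty := by
  obtain ⟨x, hxK, hmax⟩ := hK.exists_isMaxOn hne continuous_norm.continuousOn
  refine ⟨x, ?_⟩
  rw [exposed_point_def]
  refine ⟨hxK, innerSL ℝ x, fun y hy => ?_⟩
  have hn : ‖y‖ ≤ ‖x‖ := hmax hy
  have key : ∀ z : EuclideanSpace ℝ (Fin n), ‖z‖ ≤ ‖x‖ →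
      (inner ℝ x x : ℝ) ≤ inner ℝ x z → z = x := by
    intro z hz hle
    have h1 : ‖z - x‖ ^ 2 = ‖z‖ ^ 2 - 2 * inner ℝ x z + ‖x‖ ^ 2 := by
      rw [norm_sub_pow_two_real, real_inner_comm]
    have h2 : (inner ℝ x x : ℝ) = ‖x‖ ^ 2 := real_inner_self_eq_norm_sq x
    have hz2 : ‖z‖ ^ 2 ≤ ‖x‖ ^ 2 := by
      apply pow_le_pow_left₀ (norm_nonneg z) hz
    have : ‖z - x‖ ^ 2 ≤ 0 := by nlinarith
    have : ‖z - x‖ = 0 := by nlinarith [sq_nonneg ‖z - x‖, norm_nonneg (z - x)]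
    rwa [norm_eq_zero, sub_eq_zero] at this
  constructor
  · -- inner x y ≤ inner x x
    by_contra h
    push_neg at h
    exact absurd (key y hn h.le) (by rintro rfl; exact lt_irrefl _ h)
  · intro h
    exact key y hn h
end

section
/- Let M be a symmetric negative definite real n×n matrix with M_{ij} ≥ 0 for all i ≠ j, and let x ∈ ℝ^n be a vector such that (Mx)_i ≤ 0 for every i. Then x_i ≥ 0 for every i. -/
/-- Negativity lemma, linear algebra form: if `M` is symmetric negative definite
with nonnegative off-diagonal entries and `M x ≤ 0` componentwise, then `x ≥ 0`. -/
theorem negativity_lemma (n : ℕ) (M : Matrix (Fin n) (Fin n) ℝ)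
    (hsymm : M.IsSymm)
    (hneg : ∀ y : Fin n → ℝ, y ≠ 0 → dotProduct y (M.mulVec y) < 0)
    (hoff : ∀ i j, i ≠ j → 0 ≤ M i j)
    (x : Fin n → ℝ) (hx : ∀ i, M.mulVec x i ≤ 0) :
    ∀ i, 0 ≤ x i := by
  classical
  set y : Fin n → ℝ := fun i => max (-x i) 0 with hydef
  set p : Fin n → ℝ := fun i => max (x i) 0 with hpdef
  have hy0 : ∀ i, 0 ≤ y i := fun i => le_max_right _ _
  have hp0 : ∀ i, 0 ≤ p i := fun i => le_max_right _ _
  have hpxy : p = x + y := by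
    funext i
    simp only [hpdef, hydef, Pi.add_apply]
    rcases le_total (x i) 0 with h | h
    · rw [max_eq_right h, max_eq_left (by linarith : (0:ℝ) ≤ -x i)]; ring
    · rw [max_eq_left h, max_eq_right (by linarith : -x i ≤ 0)]; ring
  have h1 : 0 ≤ dotProduct y (M.mulVec p) := by
    rw [dotProduct]
    apply Finset.sum_nonneg
    intro i _
    rcases eq_or_lt_of_le (hy0 i) with h | h
    · rw [← h, zero_mul]
    · apply mul_nonneg (le_of_lt h)
      rw [Matrix.mulVec, dotProduct]
      apply Finset.sum_nonneg
      intro j _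
      rcases eq_or_ne i j with rfl | hij
      · have hxi : x i < 0 := by
          by_contra hcon
          push_neg at hcon
          have : y i = 0 := by
            simp only [hydef]; rw [max_eq_right (by linarith)]
          linarith
        have : p i = 0 := by
          simp only [hpdef]; rw [max_eq_right hxi.le]
        rw [this, mul_zero]
      · exact mul_nonneg (hoff i j hij) (hp0 j)
  have h2 : dotProduct y (M.mulVec x) ≤ 0 := by
    rw [dotProduct]
    apply Finset.sum_nonpos
    intro i _
    exact mul_nonpos_of_nonneg_of_nonpos (hy0 i) (hx i)
  have hkey : 0 ≤ dotProduct y (M.mulVec y) := by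
    have : dotProduct y (M.mulVec p)
        = dotProduct y (M.mulVec x) + dotProduct y (M.mulVec y) := by
      rw [hpxy, Matrix.mulVec_add, dotProduct_add]
    linarith
  have hy : y = 0 := by
    by_contra h
    exact absurd (hneg y h) (not_lt.mpr hkey)
  intro i
  have h0 : max (-x i) 0 = 0 := congrFun hy i
  have h1 := le_max_left (-x i) (0:ℝ)
  rw [h0] at h1
  linarith
end

section
/- Let C be a closed convex cone in ℝ^n admitting a compact convex base K (i.e. C = ℝ≥0·K with 0 ∉ K and K convex compact). Let V ⊂ C be a convex subcone. If C ≠ closure(V), then there exists an exposed point x of K with x ∉ closure(V). -/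
open RealInnerProductSpace

set_option maxHeartbeats 1000000

/-- If a closed convex cone `C` with compact convex base `K` strictly contains the
closure of a convex subcone `V`, then some exposed point of `K` lies outside
`closure V`. -/
theorem exists_exposed_point_not_mem_closure (n : ℕ)
    (C : Set (EuclideanSpace ℝ (Fin n))) (hCclosed : IsClosed C) (hCconv : Convex ℝ C)
    (hCcone : ∀ r : ℝ, 0 ≤ r → ∀ x ∈ C, r • x ∈ C)
    (K : Set (EuclideanSpace ℝ (Fin n))) (hK : IsCompact K) (hKconv : Convex ℝ K)
    (h0K : (0 : EuclideanSpace ℝ (Fin n)) ∉ K)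
    (hCK : C = {y | ∃ r : ℝ, 0 ≤ r ∧ ∃ x ∈ K, y = r • x})
    (V : Set (EuclideanSpace ℝ (Fin n))) (hVC : V ⊆ C) (hVconv : Convex ℝ V)
    (hVcone : ∀ r : ℝ, 0 ≤ r → ∀ x ∈ V, r • x ∈ V)
    (hne : C ≠ closure V) :
    ∃ x ∈ K.exposedPoints ℝ, x ∉ closure V := by
  -- K is nonempty
  have hKne : K.Nonempty := by
    rcases Set.eq_empty_or_nonempty K with hKe | h
    · exfalso
      apply hne
      have hC : C = ∅ := by
        rw [hCK]
        ext y; simp [hKe]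
      have hV : V = ∅ := Set.subset_eq_empty hVC hC
      rw [hC, hV, closure_empty]
    · exact h
  -- find u with ⟪u, ·⟫ ≤ 0 on closure V and positive somewhere on K
  have key : ∃ u : EuclideanSpace ℝ (Fin n), (∀ w ∈ closure V, ⟪u, w⟫ ≤ 0) ∧ ∃ x ∈ K, 0 < ⟪u, x⟫ := by
    rcases Set.eq_empty_or_nonempty V with hVe | ⟨w₀, hw₀⟩
    · obtain ⟨x₀, hx₀⟩ := hKne
      refine ⟨x₀, by simp [hVe], x₀, hx₀, ?_⟩
      have hne0 : x₀ ≠ 0 := fun h => h0K (h ▸ hx₀)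
      have := norm_pos_iff.mpr hne0
      rw [real_inner_self_eq_norm_sq]
      positivity
    · -- V nonempty; 0 ∈ V
      have h0V : (0 : EuclideanSpace ℝ (Fin n)) ∈ V := by
        have := hVcone 0 le_rfl w₀ hw₀
        simpa using this
      have hclVC : closure V ⊆ C := closure_minimal hVC hCclosed
      obtain ⟨z, hzC, hzV⟩ : ∃ z ∈ C, z ∉ closure V := by
        by_contra h
        push_neg at h
        exact hne (Set.Subset.antisymm h hclVC)
      obtain ⟨f, c, hfV, hfz⟩ :=
        geometric_hahn_banach_closed_point ((hVconv.closure)) isClosed_closure hzV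
      have hc0 : 0 < c := by
        have := hfV 0 (subset_closure h0V)
        simpa using this
      -- f ≤ 0 on V, hence on closure V
      have hfV0 : ∀ w ∈ closure V, f w ≤ 0 := by
        have hsub : closure V ⊆ f ⁻¹' Set.Iic 0 := by
          apply closure_minimal _ (IsClosed.preimage f.continuous isClosed_Iic)
          intro w hw
          by_contra hpos
          simp only [Set.mem_preimage, Set.mem_Iic, not_le] at hpos
          have ht : (0:ℝ) ≤ c / f w := le_of_lt (div_pos hc0 hpos)
          have := hfV _ (subset_closure (hVcone _ ht w hw))
          rw [map_smul] at this
          simp only [smul_eq_mul] at this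
          rw [div_mul_cancel₀ c (ne_of_gt hpos)] at this
          exact lt_irrefl c this
        exact fun w hw => hsub hw
      -- z = r • x with x ∈ K, f x > 0
      rw [hCK] at hzC
      obtain ⟨r, hr, x, hxK, rfl⟩ := hzC
      have hfx : 0 < f x := by
        rw [map_smul, smul_eq_mul] at hfz
        nlinarith [hfz, hc0]
      refine ⟨(InnerProductSpace.toDual ℝ (EuclideanSpace ℝ (Fin n))).symm f, ?_, x, hxK, ?_⟩
      · intro w hw
        rw [InnerProductSpace.toDual_symm_apply]
        exact hfV0 w hw
      · rw [InnerProductSpace.toDual_symm_apply]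
        exact hfx
  obtain ⟨u, hu0, x₀, hx₀K, ha⟩ := key
  set a := ⟪u, x₀⟫ with ha_def
  -- bound on K
  obtain ⟨B, hB⟩ : ∃ B : ℝ, ∀ y ∈ K, ‖y‖ ≤ B := by
    obtain ⟨r, hr⟩ := hK.isBounded.subset_closedBall 0
    exact ⟨r, fun y hy => by simpa [mem_closedBall_zero_iff] using hr hy⟩
  have hB0 : 0 < B := lt_of_lt_of_le (norm_pos_iff.mpr (fun h => h0K (h ▸ hx₀K))) (hB x₀ hx₀K)
  set R : ℝ := B ^ 2 / a with hR_def
  have hR0 : 0 < R := div_pos (by positivity) ha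
  set v : EuclideanSpace ℝ (Fin n) := R • u with hv_def
  -- farthest point
  obtain ⟨x, hxK, hmax⟩ := hK.exists_isMaxOn hKne
    (Continuous.continuousOn (by continuity : Continuous fun y : EuclideanSpace ℝ (Fin n) => ‖y + v‖))
  have hmax' : ∀ y ∈ K, ‖y + v‖ ≤ ‖x + v‖ := fun y hy => hmax hy
  -- ⟪u, x⟫ > 0
  have hux : 0 < ⟪u, x⟫ := by
    have h1 : ‖x₀ + v‖ ≤ ‖x + v‖ := hmax' x₀ hx₀K
    have hip1 : ⟪x₀, v⟫ = R * a := by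
      rw [hv_def, real_inner_smul_right, real_inner_comm]
    have hip2 : ⟪x, v⟫ = R * ⟪u, x⟫ := by
      rw [hv_def, real_inner_smul_right, real_inner_comm]
    have e1 : ‖x₀ + v‖ ^ 2 = ‖x₀‖ ^ 2 + 2 * (R * a) + ‖v‖ ^ 2 := by
      rw [norm_add_sq_real, hip1]
    have e2 : ‖x + v‖ ^ 2 = ‖x‖ ^ 2 + 2 * (R * ⟪u, x⟫) + ‖v‖ ^ 2 := by
      rw [norm_add_sq_real, hip2]
    have hsq : ‖x₀ + v‖ ^ 2 ≤ ‖x + v‖ ^ 2 := by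
      apply sq_le_sq' _ h1
      have := norm_nonneg (x₀ + v); have := norm_nonneg (x + v); linarith
    have hkey : ‖x₀‖ ^ 2 + 2 * (R * a) ≤ ‖x‖ ^ 2 + 2 * (R * ⟪u, x⟫) := by
      linarith [hsq, e1, e2]
    have hxB : ‖x‖ ≤ B := hB x hxK
    have hx0B : (0:ℝ) ≤ ‖x₀‖ := norm_nonneg _
    have hRa : R * a = B ^ 2 := by
      rw [hR_def]; field_simp
    have hxB2 : ‖x‖ ^ 2 ≤ B ^ 2 := pow_le_pow_left₀ (norm_nonneg x) hxB 2
    have h2 : B ^ 2 ≤ 2 * (R * ⟪u, x⟫) := by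
      have := sq_nonneg ‖x₀‖
      linarith [hkey, hxB2]
    have hB2 : (0:ℝ) < B ^ 2 := by positivity
    by_contra hle
    push_neg at hle
    have : R * ⟪u, x⟫ ≤ 0 := mul_nonpos_of_nonneg_of_nonpos hR0.le hle
    linarith
  -- x not in closure V
  have hxnotin : x ∉ closure V := fun h => absurd (hu0 x h) (not_le.mpr hux)
  -- x is an exposed point
  refine ⟨x, ?_, hxnotin⟩
  rw [exposed_point_def]
  refine ⟨hxK, innerSL ℝ (x + v), fun y hy => ?_⟩
  have hcs : ⟪x + v, y + v⟫ ≤ ‖x + v‖ * ‖y + v‖ := real_inner_le_norm _ _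
  have hle : ‖y + v‖ ≤ ‖x + v‖ := hmax' y hy
  have hbound : ⟪x + v, y + v⟫ ≤ ‖x + v‖ ^ 2 := by
    calc ⟪x + v, y + v⟫ ≤ ‖x + v‖ * ‖y + v‖ := hcs
    _ ≤ ‖x + v‖ * ‖x + v‖ := by
        exact mul_le_mul_of_nonneg_left hle (norm_nonneg _)
    _ = ‖x + v‖ ^ 2 := by ring
  have hsplit : ⟪x + v, y + v⟫ = ⟪x + v, y⟫ + ⟪x + v, v⟫ := inner_add_right _ _ _
  have hselfsplit : ⟪x + v, x⟫ + ⟪x + v, v⟫ = ‖x + v‖ ^ 2 := by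
    rw [← inner_add_right]; exact real_inner_self_eq_norm_sq _
  simp only [innerSL_apply_apply]
  constructor
  · linarith [hbound, hsplit, hselfsplit]
  · intro hge'
    have h2 : ‖x + v‖ ^ 2 ≤ ⟪x + v, y + v⟫ := by linarith [hsplit, hselfsplit]
    have hy2 : ‖y + v‖ ^ 2 ≤ ‖x + v‖ ^ 2 := by
      apply sq_le_sq' _ hle
      have := norm_nonneg (y + v); have := norm_nonneg (x + v); linarith
    have hzero : ‖y - x‖ ^ 2 ≤ 0 := by
      have heq : y - x = (y + v) - (x + v) := by abel
      rw [heq, norm_sub_sq_real]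
      have hcomm : ⟪y + v, x + v⟫ = ⟪x + v, y + v⟫ := real_inner_comm _ _
      rw [hcomm]
      linarith
    have h0 : ‖y - x‖ ^ 2 = 0 := le_antisymm hzero (sq_nonneg _)
    have h0' : ‖y - x‖ = 0 := by
      have := sq_nonneg ‖y - x‖
      nlinarith [norm_nonneg (y - x)]
    exact norm_sub_eq_zero_iff.mp h0'
end
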